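/- Let p be a prime, n a natural number, and H a p-subgroup of Σ_n that is not elementary abelian. Then there exists a subgroup V of H of order p, contained in the center of H, such that for every H-invariant setoid λ on Fin n with ⊥ < λ < ⊤, the action of V on the set of λ-classes is not transitive. -/

import Mathlib

open scoped commutatorElement

/-- Let `p` be a prime and `H` a `p`-subgroup of `Σ_n` that is not
elementary abelian.  Then there is a central subgroup `V ≤ H` of order `p` such that
for every `H`-invariant setoid `λ` on `Fin n` with `⊥ < λ < ⊤`, the action of `V` on
the set of `λ`-classes is not transitive. -/
theorem stmt2 (p n : ℕ) (hp : p.Prime) (H : Subgroup (Equiv.Perm (Fin n)))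
    (hH : IsPGroup p H)
    (hne : ¬ ((∀ a ∈ H, ∀ b ∈ H, a * b = b * a) ∧ ∀ x ∈ H, x ^ p = 1)) :
    ∃ V : Subgroup (Equiv.Perm (Fin n)), V ≤ H ∧ Nat.card V = p ∧
      (∀ v ∈ V, ∀ h ∈ H, v * h = h * v) ∧
      ∀ lam : Setoid (Fin n),
        (∀ h ∈ H, ∀ x y : Fin n, lam.r x y → lam.r (h x) (h y)) →
        ⊥ < lam → lam < ⊤ →
        ¬ ∀ x y : Fin n, ∃ v ∈ V, lam.r (v x) y := by
  classical
  haveI : Fact p.Prime := ⟨hp⟩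
  -- The generating set: commutators and p-th powers inside H
  set S : Set ↥H := {x | (∃ a b : ↥H, ⁅a, b⁆ = x) ∨ (∃ g : ↥H, g ^ p = x)} with hSdef
  set N : Subgroup ↥H := Subgroup.normalClosure S with hNdef
  haveI hNnormal : N.Normal := Subgroup.normalClosure_normal
  -- N is nontrivial
  have hNnt : Nontrivial ↥N := by
    rw [not_and_or] at hne
    push_neg at hne
    rcases hne with ⟨a, ha, b, hb, hab⟩ | ⟨x, hx, hxp⟩
    · refine ⟨⟨⟨⁅(⟨a, ha⟩ : ↥H), (⟨b, hb⟩ : ↥H)⁆,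
        Subgroup.subset_normalClosure (Or.inl ⟨_, _, rfl⟩)⟩, 1, ?_⟩⟩
      intro hcon
      have h1 : ⁅(⟨a, ha⟩ : ↥H), (⟨b, hb⟩ : ↥H)⁆ = 1 := Subtype.ext_iff.mp hcon
      have := commutatorElement_eq_one_iff_mul_comm.mp h1
      exact hab (congrArg Subtype.val this)
    · refine ⟨⟨(⟨x, hx⟩ : ↥H) ^ p,
        Subgroup.subset_normalClosure (Or.inr ⟨_, rfl⟩)⟩, 1, ?_⟩
      intro hcon
      have h1 : (⟨x, hx⟩ : ↥H) ^ p = 1 := Subtype.ext_iff.mp hcon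
      have h2 := Subtype.ext_iff.mp h1
      rw [SubmonoidClass.coe_pow] at h2
      exact hxp h2
  -- p divides the cardinality of N
  have hNp : IsPGroup p ↥N := hH.to_subgroup N
  obtain ⟨k, hk0, hkcard⟩ := hNp.nontrivial_iff_card.mp hNnt
  have hpN : p ∣ Nat.card ↥N := hkcard ▸ dvd_pow_self p hk0.ne'
  -- conjugation action of H on N has a nontrivial fixed point
  have hConj : IsPGroup p (ConjAct ↥H) := hH.of_equiv ConjAct.toConjAct
  have h1fix : (1 : ↥N) ∈ MulAction.fixedPoints (ConjAct ↥H) ↥N := by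
    intro g
    apply Subtype.ext
    rw [ConjAct.Subgroup.val_conj_smul]
    simp [ConjAct.smul_def]
  obtain ⟨b, hbfix, hb1⟩ :=
    hConj.exists_fixed_point_of_prime_dvd_card_of_fixed_point ↥N hpN h1fix
  have hbne : (b : ↥H) ≠ 1 := by
    intro h
    exact hb1 (Subtype.ext h.symm)
  have hbcen : (b : ↥H) ∈ Subgroup.center ↥H := by
    rw [Subgroup.mem_center_iff]
    intro g
    have h1 := congrArg Subtype.val (hbfix (ConjAct.toConjAct g))
    rw [ConjAct.Subgroup.val_conj_smul, ConjAct.smul_def, ConjAct.ofConjAct_toConjAct] at h1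
    rw [mul_inv_eq_iff_eq_mul] at h1
    exact h1
  -- extract an element of order p
  obtain ⟨k', hk'⟩ := hH (b : ↥H)
  obtain ⟨j, hjle, hoj⟩ := (Nat.dvd_prime_pow hp).mp (orderOf_dvd_of_pow_eq_one hk')
  have hj0 : j ≠ 0 := by
    rintro rfl
    rw [pow_zero] at hoj
    exact hbne (orderOf_eq_one_iff.mp hoj)
  set v₀ : ↥H := (b : ↥H) ^ (p ^ (j - 1)) with hv₀def
  have hov : orderOf v₀ = p := by
    rw [hv₀def, orderOf_pow, hoj,
      Nat.gcd_eq_right (pow_dvd_pow p (Nat.sub_le j 1)),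
      Nat.pow_div (Nat.sub_le j 1) hp.pos,
      Nat.sub_sub_self (Nat.one_le_iff_ne_zero.mpr hj0), pow_one]
  have hv₀N : v₀ ∈ N := N.pow_mem b.2 _
  have hv₀cen : v₀ ∈ Subgroup.center ↥H := (Subgroup.center ↥H).pow_mem hbcen _
  set v : Equiv.Perm (Fin n) := (v₀ : Equiv.Perm (Fin n)) with hvdef
  have hvH : v ∈ H := v₀.2
  have hovv : orderOf v = p := by
    have := orderOf_injective H.subtype (Subgroup.subtype_injective H) v₀
    rw [← hov]
    exact this
  refine ⟨Subgroup.zpowers v, Subgroup.zpowers_le.mpr hvH, ?_, ?_, ?_⟩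
  · rw [Nat.card_zpowers, hovv]
  · rintro u ⟨m, rfl⟩ h hh
    have hc : Commute v h := by
      have h1 := Subgroup.mem_center_iff.mp hv₀cen ⟨h, hh⟩
      have h2 := congrArg Subtype.val h1
      exact (h2 : h * v = v * h).symm
    exact (hc.zpow_left m).eq
  · intro lam hinv hbot htop T
    -- witnesses of lam ≠ ⊤
    obtain ⟨x0, y0, hxy0⟩ : ∃ x y : Fin n, ¬ lam.r x y := by
      by_contra hcon
      push_neg at hcon
      exact htop.ne (le_antisymm le_top (fun x y _ => hcon x y))
    -- two-sided invariance
    have hinv' : ∀ h : ↥H, ∀ x y, lam.r x y → lam.r ((h : Equiv.Perm (Fin n)) x)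
        ((h : Equiv.Perm (Fin n)) y) := fun h x y hxy => hinv h.1 h.2 x y hxy
    -- the permutation action on the quotient
    let φ : ↥H → Equiv.Perm (Quotient lam) := fun h =>
      { toFun := Quotient.map' (h : Equiv.Perm (Fin n)) (fun x y hxy => hinv' h x y hxy)
        invFun := Quotient.map' ((h⁻¹ : ↥H) : Equiv.Perm (Fin n))
          (fun x y hxy => hinv' h⁻¹ x y hxy)
        left_inv := fun q => Quotient.inductionOn' q (fun x => by
          simp only [Quotient.map'_mk'']
          congr 1
          simp)
        right_inv := fun q => Quotient.inductionOn' q (fun x => by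
          simp only [Quotient.map'_mk'']
          congr 1
          simp) }
    have φmul : ∀ a b : ↥H, φ (a * b) = φ a * φ b := by
      intro a b
      ext q
      refine Quotient.inductionOn' q (fun x => ?_)
      rfl
    let ρ : ↥H →* Equiv.Perm (Quotient lam) := MonoidHom.mk' φ φmul
    -- the range is a finite p-group
    haveI : Fintype (Quotient lam) := Fintype.ofFinite _
    have hRp : IsPGroup p ↥ρ.range := by
      rintro ⟨g, hg⟩
      obtain ⟨h, rfl⟩ := hg
      obtain ⟨k, hk⟩ := hH h
      refine ⟨k, ?_⟩
      apply Subtype.ext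
      have : ρ h ^ p ^ k = 1 := by rw [← map_pow, hk, map_one]
      simpa using this
    obtain ⟨m, hm⟩ := hRp.exists_card_eq
    -- the number of classes is at most p
    have hQle : Nat.card (Quotient lam) ≤ p := by
      have hsurj : Function.Surjective
          (fun u : ↥(Subgroup.zpowers v) => (Quotient.mk'' ((u : Equiv.Perm (Fin n)) x0) :
            Quotient lam)) := by
        intro q
        refine Quotient.inductionOn' q (fun y => ?_)
        obtain ⟨u, hu, hr⟩ := T x0 y
        exact ⟨⟨u, hu⟩, Quotient.sound' hr⟩
      calc Nat.card (Quotient lam) ≤ Nat.card ↥(Subgroup.zpowers v) :=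
            Nat.card_le_card_of_surjective _ hsurj
        _ = p := by rw [Nat.card_zpowers, hovv]
    -- hence the range has cardinality dividing p
    have hRdvd : Nat.card ↥ρ.range ∣ Nat.factorial p := by
      have h1 : Nat.card ↥ρ.range ∣ Nat.card (Equiv.Perm (Quotient lam)) :=
        Subgroup.card_subgroup_dvd_card _
      have h2 : Nat.card (Equiv.Perm (Quotient lam)) = Nat.factorial (Nat.card (Quotient lam)) := by
        rw [Nat.card_eq_fintype_card, Nat.card_eq_fintype_card, Fintype.card_perm]
      exact h1.trans (h2 ▸ Nat.factorial_dvd_factorial hQle)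
    have hmle : m ≤ 1 := by
      by_contra hm2
      push_neg at hm2
      have hpp : p ^ 2 ∣ Nat.factorial p := dvd_trans (pow_dvd_pow p hm2) (hm ▸ hRdvd)
      have : p ∣ Nat.factorial (p - 1) := by
        have h3 : p * p ∣ p * Nat.factorial (p - 1) := by
          rw [Nat.mul_factorial_pred hp.ne_zero]
          simpa [sq] using hpp
        exact (mul_dvd_mul_iff_left hp.pos.ne').mp h3
      have h4 := (hp.dvd_factorial).mp this
      have h5 := hp.two_le
      omega
    have hRcard : Nat.card ↥ρ.range ∣ p := by rw [hm]; simpa using pow_dvd_pow p hmle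
    -- the range is abelian of exponent p
    have hcases := (Nat.dvd_prime hp).mp hRcard
    have Hcomm : ∀ x y : ↥ρ.range, x * y = y * x := by
      rcases hcases with h1 | h1
      · haveI : Subsingleton ↥ρ.range := (Nat.card_eq_one_iff_unique.mp h1).1
        intro x y
        exact Subsingleton.elim _ _
      · haveI : IsCyclic ↥ρ.range := isCyclic_of_prime_card h1
        obtain ⟨g, hg⟩ := IsCyclic.exists_generator (α := ↥ρ.range)
        intro x y
        obtain ⟨i, rfl⟩ := hg x
        obtain ⟨jj, rfl⟩ := hg y
        rw [← zpow_add, ← zpow_add, add_comm]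
    have Hexp : ∀ x : ↥ρ.range, x ^ p = 1 := by
      rcases hcases with h1 | h1
      · haveI : Subsingleton ↥ρ.range := (Nat.card_eq_one_iff_unique.mp h1).1
        intro x
        exact Subsingleton.elim _ _
      · intro x
        rw [← h1]
        exact pow_card_eq_one'
    -- hence N is contained in the kernel of ρ
    have hSker : S ⊆ (ρ.ker : Set ↥H) := by
      rintro s (⟨a, c, rfl⟩ | ⟨g, rfl⟩)
      · rw [SetLike.mem_coe, MonoidHom.mem_ker, map_commutatorElement,
          commutatorElement_eq_one_iff_mul_comm]
        have h1 := Hcomm ⟨ρ a, a, rfl⟩ ⟨ρ c, c, rfl⟩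
        exact congrArg Subtype.val h1
      · rw [SetLike.mem_coe, MonoidHom.mem_ker, map_pow]
        have h1 := Hexp ⟨ρ g, g, rfl⟩
        have h2 := congrArg Subtype.val h1
        simpa using h2
    have hNker : N ≤ ρ.ker := Subgroup.normalClosure_le_normal hSker
    have hv₀ker : ρ v₀ = 1 := hNker hv₀N
    -- so every element of V fixes every class
    have hfix : ∀ (mm : ℤ) (x : Fin n), lam.r ((v ^ mm) x) x := by
      intro mm x
      have h1 : ρ (v₀ ^ mm) = 1 := by rw [map_zpow, hv₀ker, one_zpow]
      have h2 : (ρ (v₀ ^ mm)) (Quotient.mk'' x) = Quotient.mk'' x := by rw [h1]; rfl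
      have h3 : (Quotient.mk'' (((v₀ ^ mm : ↥H) : Equiv.Perm (Fin n)) x) : Quotient lam)
          = Quotient.mk'' x := h2
      have h4 := Quotient.exact' h3
      simpa using h4
    -- contradiction with transitivity
    obtain ⟨u, hu, hr⟩ := T x0 y0
    obtain ⟨mm, rfl⟩ := hu
    exact hxy0 (lam.trans' (lam.symm' (hfix mm x0)) hr)
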